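/- Let n be a natural number and let μ be a probability measure on (Fin n → ℝ) that is a product of n probability measures on ℝ (i.e., the coordinates are independent). If f, g : (Fin n → ℝ) → ℝ are both monotone nondecreasing (with respect to the coordinatewise partial order) and both are square-integrable with respect to μ, then ∫ f·g dμ ≥ (∫ f dμ)·(∫ g dμ). The same conclusion holds if f and g are both monotone nonincreasing. -/

import Mathlib

open MeasureTheory

section Aux

variable {α β : Type*} [MeasurableSpace α] [MeasurableSpace β]

lemma l2_mul_integrable {μ : Measure α} {f g : α → ℝ}
    (hf : MemLp f 2 μ) (hg : MemLp g 2 μ) : Integrable (fun x => f x * g x) μ := by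
  have h : (1 : ENNReal) / 1 = 1 / 2 + 1 / 2 := by
    rw [ENNReal.div_add_div_same, one_add_one_eq_two,
      ENNReal.div_self two_ne_zero ENNReal.ofNat_ne_top, one_div_one]
  have := hg.smul (r := 1) hf (hpqr := ⟨by rw [ENNReal.inv_two_add_inv_two, inv_one]⟩)
  rw [← memLp_one_iff_integrable]
  exact this

/-- Chebyshev / 1D-Harris inequality with an a.e. comonotonicity hypothesis. -/
lemma chebyshev_ae (μ : Measure α) [IsProbabilityMeasure μ]
    {F G : α → ℝ} (hF : Integrable F μ) (hG : Integrable G μ)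
    (hFG : Integrable (fun x => F x * G x) μ)
    (hco : ∀ᵐ p ∂(μ.prod μ), 0 ≤ (F p.1 - F p.2) * (G p.1 - G p.2)) :
    (∫ x, F x ∂μ) * ∫ x, G x ∂μ ≤ ∫ x, F x * G x ∂μ := by
  have i1 : Integrable (fun p : α × α => F p.1 * G p.1) (μ.prod μ) := by
    simpa using hFG.mul_prod (integrable_const (1 : ℝ))
  have i4 : Integrable (fun p : α × α => F p.2 * G p.2) (μ.prod μ) := by
    simpa using (integrable_const (1 : ℝ)).mul_prod hFG
  have i2 : Integrable (fun p : α × α => F p.1 * G p.2) (μ.prod μ) := hF.mul_prod hG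
  have i3 : Integrable (fun p : α × α => F p.2 * G p.1) (μ.prod μ) := by
    have := hG.mul_prod hF
    simpa [mul_comm] using this
  have key : 0 ≤ ∫ p, (F p.1 - F p.2) * (G p.1 - G p.2) ∂(μ.prod μ) :=
    integral_nonneg_of_ae hco
  have expand : (fun p : α × α => (F p.1 - F p.2) * (G p.1 - G p.2))
      = fun p => (F p.1 * G p.1 + F p.2 * G p.2) - (F p.1 * G p.2 + F p.2 * G p.1) := by
    funext p; ring
  have ia : Integrable (fun p : α × α => F p.1 * G p.1 + F p.2 * G p.2) (μ.prod μ) := i1.add i4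
  have ib : Integrable (fun p : α × α => F p.1 * G p.2 + F p.2 * G p.1) (μ.prod μ) := i2.add i3
  rw [expand, integral_sub ia ib, integral_add i1 i4, integral_add i2 i3] at key
  have e1 : ∫ p : α × α, F p.1 * G p.1 ∂(μ.prod μ) = ∫ x, F x * G x ∂μ := by
    simpa using integral_prod_mul (μ := μ) (ν := μ) (fun x => F x * G x) (fun _ => (1 : ℝ))
  have e4 : ∫ p : α × α, F p.2 * G p.2 ∂(μ.prod μ) = ∫ x, F x * G x ∂μ := by
    simpa using integral_prod_mul (μ := μ) (ν := μ) (fun _ => (1 : ℝ)) (fun x => F x * G x)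
  have e2 : ∫ p : α × α, F p.1 * G p.2 ∂(μ.prod μ) = (∫ x, F x ∂μ) * ∫ x, G x ∂μ :=
    integral_prod_mul F G
  have e3 : ∫ p : α × α, F p.2 * G p.1 ∂(μ.prod μ) = (∫ x, F x ∂μ) * ∫ x, G x ∂μ := by
    have := integral_prod_mul (μ := μ) (ν := μ) G F
    simp only [mul_comm] at this ⊢
    exact this
  rw [e1, e2, e3, e4] at key
  linarith

end Aux

section Step

variable {α β : Type*} [MeasurableSpace α] [MeasurableSpace β] [LinearOrder α] [Preorder β]

/-- Inductive step: Harris inequality on a product `μ.prod ν` given it on `ν`. -/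
lemma harris_step (μ : Measure α) (ν : Measure β)
    [IsProbabilityMeasure μ] [IsProbabilityMeasure ν]
    (φ ψ : α × β → ℝ)
    (hφ2 : MemLp φ 2 (μ.prod ν)) (hψ2 : MemLp ψ 2 (μ.prod ν))
    (hφm : Monotone φ) (hψm : Monotone ψ)
    (ih : ∀ u v : β → ℝ, MemLp u 2 ν → MemLp v 2 ν → Monotone u → Monotone v →
      (∫ y, u y ∂ν) * ∫ y, v y ∂ν ≤ ∫ y, u y * v y ∂ν) :
    (∫ p, φ p ∂(μ.prod ν)) * ∫ p, ψ p ∂(μ.prod ν) ≤ ∫ p, φ p * ψ p ∂(μ.prod ν) := by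
  have hφi : Integrable φ (μ.prod ν) := hφ2.integrable one_le_two
  have hψi : Integrable ψ (μ.prod ν) := hψ2.integrable one_le_two
  set F : α → ℝ := fun t => ∫ y, φ (t, y) ∂ν with hFdef
  set G : α → ℝ := fun t => ∫ y, ψ (t, y) ∂ν with hGdef
  have hFm : AEStronglyMeasurable F μ := hφ2.1.integral_prod_right'
  have hGm : AEStronglyMeasurable G μ := hψ2.1.integral_prod_right'
  have hFint : Integrable F μ := hφi.integral_prod_left
  have hGint : Integrable G μ := hψi.integral_prod_left
  -- a.e. well-behaved sections
  have hsecφ2 : ∀ᵐ t ∂μ, MemLp (fun y => φ (t, y)) 2 ν := by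
    have hφsq : Integrable (fun p => φ p * φ p) (μ.prod ν) := l2_mul_integrable hφ2 hφ2
    filter_upwards [hφ2.1.prodMk_left, hφsq.prod_right_ae] with t h1 h2
    rw [memLp_two_iff_integrable_sq h1]
    simpa [sq] using h2
  have hsecψ2 : ∀ᵐ t ∂μ, MemLp (fun y => ψ (t, y)) 2 ν := by
    have hψsq : Integrable (fun p => ψ p * ψ p) (μ.prod ν) := l2_mul_integrable hψ2 hψ2
    filter_upwards [hψ2.1.prodMk_left, hψsq.prod_right_ae] with t h1 h2
    rw [memLp_two_iff_integrable_sq h1]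
    simpa [sq] using h2
  -- integrability of F * G via a triple product
  have mpfst : MeasurePreserving (Prod.fst : β × β → β) (ν.prod ν) ν :=
    ⟨measurable_fst, by rw [Measure.map_fst_prod]; simp⟩
  have mpsnd : MeasurePreserving (Prod.snd : β × β → β) (ν.prod ν) ν :=
    ⟨measurable_snd, by rw [Measure.map_snd_prod]; simp⟩
  have mp1 : MeasurePreserving (fun q : α × β × β => (q.1, q.2.1))
      (μ.prod (ν.prod ν)) (μ.prod ν) := (MeasurePreserving.id μ).prod mpfst
  have mp2 : MeasurePreserving (fun q : α × β × β => (q.1, q.2.2))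
      (μ.prod (ν.prod ν)) (μ.prod ν) := (MeasurePreserving.id μ).prod mpsnd
  have MΦ : MemLp (fun q : α × β × β => φ (q.1, q.2.1)) 2 (μ.prod (ν.prod ν)) :=
    hφ2.comp_measurePreserving mp1
  have MΨ : MemLp (fun q : α × β × β => ψ (q.1, q.2.2)) 2 (μ.prod (ν.prod ν)) :=
    hψ2.comp_measurePreserving mp2
  have hΦΨ : Integrable (fun q : α × β × β => φ (q.1, q.2.1) * ψ (q.1, q.2.2))
      (μ.prod (ν.prod ν)) := l2_mul_integrable MΦ MΨ
  have hB : Integrable (fun t => ∫ w : β × β, ‖φ (t, w.1) * ψ (t, w.2)‖ ∂(ν.prod ν)) μ := by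
    simpa using hΦΨ.norm.integral_prod_left
  have hFG : Integrable (fun t => F t * G t) μ := by
    refine hB.mono' (hFm.mul hGm) ?_
    filter_upwards [hφi.prod_right_ae, hψi.prod_right_ae] with t h1 h2
    have eq1 : ∫ w : β × β, ‖φ (t, w.1) * ψ (t, w.2)‖ ∂(ν.prod ν)
        = (∫ y, ‖φ (t, y)‖ ∂ν) * ∫ y, ‖ψ (t, y)‖ ∂ν := by
      simp_rw [norm_mul]
      exact integral_prod_mul (fun y => ‖φ (t, y)‖) (fun y => ‖ψ (t, y)‖)
    rw [eq1]
    calc ‖F t * G t‖ = ‖F t‖ * ‖G t‖ := norm_mul _ _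
      _ ≤ (∫ y, ‖φ (t, y)‖ ∂ν) * ∫ y, ‖ψ (t, y)‖ ∂ν :=
          mul_le_mul (norm_integral_le_integral_norm _) (norm_integral_le_integral_norm _)
            (norm_nonneg _) (integral_nonneg fun y => norm_nonneg _)
  -- comonotonicity of F, G a.e.
  have hco : ∀ᵐ p ∂(μ.prod μ), 0 ≤ (F p.1 - F p.2) * (G p.1 - G p.2) := by
    have hT : ∀ᵐ t ∂μ, (Integrable (fun y => φ (t, y)) ν ∧ Integrable (fun y => ψ (t, y)) ν) := by
      filter_upwards [hφi.prod_right_ae, hψi.prod_right_ae] with t h1 h2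
      exact ⟨h1, h2⟩
    have h1 : ∀ᵐ p ∂(μ.prod μ),
        Integrable (fun y => φ (p.1, y)) ν ∧ Integrable (fun y => ψ (p.1, y)) ν :=
      Measure.quasiMeasurePreserving_fst.ae hT
    have h2 : ∀ᵐ p ∂(μ.prod μ),
        Integrable (fun y => φ (p.2, y)) ν ∧ Integrable (fun y => ψ (p.2, y)) ν :=
      Measure.quasiMeasurePreserving_snd.ae hT
    filter_upwards [h1, h2] with p hp1 hp2
    have mono : ∀ s s' : α, s ≤ s' →
        Integrable (fun y => φ (s, y)) ν → Integrable (fun y => φ (s', y)) ν →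
        Integrable (fun y => ψ (s, y)) ν → Integrable (fun y => ψ (s', y)) ν →
        F s ≤ F s' ∧ G s ≤ G s' := by
      intro s s' hss hφs hφs' hψs hψs'
      constructor
      · exact integral_mono hφs hφs' fun y => hφm (Prod.mk_le_mk.2 ⟨hss, le_rfl⟩)
      · exact integral_mono hψs hψs' fun y => hψm (Prod.mk_le_mk.2 ⟨hss, le_rfl⟩)
    rcases le_total p.1 p.2 with h | h
    · obtain ⟨hF', hG'⟩ := mono p.1 p.2 h hp1.1 hp2.1 hp1.2 hp2.2
      nlinarith [hF', hG']
    · obtain ⟨hF', hG'⟩ := mono p.2 p.1 h hp2.1 hp1.1 hp2.2 hp1.2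
      exact mul_nonneg (by linarith) (by linarith)
  -- apply 1D Chebyshev to F, G
  have cheb : (∫ t, F t ∂μ) * ∫ t, G t ∂μ ≤ ∫ t, F t * G t ∂μ :=
    chebyshev_ae μ hFint hGint hFG hco
  -- inner inequality via `ih`
  have hinner : ∀ᵐ t ∂μ, F t * G t ≤ ∫ y, φ (t, y) * ψ (t, y) ∂ν := by
    filter_upwards [hsecφ2, hsecψ2] with t h1 h2
    exact ih _ _ h1 h2 (fun y y' hy => hφm (Prod.mk_le_mk.2 ⟨le_rfl, hy⟩))
      (fun y y' hy => hψm (Prod.mk_le_mk.2 ⟨le_rfl, hy⟩))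
  have hφψi : Integrable (fun p => φ p * ψ p) (μ.prod ν) := l2_mul_integrable hφ2 hψ2
  have step2 : ∫ t, F t * G t ∂μ ≤ ∫ t, (∫ y, φ (t, y) * ψ (t, y) ∂ν) ∂μ :=
    integral_mono_ae hFG hφψi.integral_prod_left hinner
  rw [integral_prod φ hφi, integral_prod ψ hψi, integral_prod _ hφψi]
  exact le_trans cheb step2

end Step

/-- Harris inequality for monotone functions on a finite product, by induction. -/
lemma harris_pi : ∀ (n : ℕ) (μi : Fin n → Measure ℝ),
    (∀ i, IsProbabilityMeasure (μi i)) → ∀ f g : (Fin n → ℝ) → ℝ,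
    MemLp f 2 (Measure.pi μi) → MemLp g 2 (Measure.pi μi) → Monotone f → Monotone g →
    (∫ ω, f ω ∂(Measure.pi μi)) * ∫ ω, g ω ∂(Measure.pi μi) ≤
      ∫ ω, f ω * g ω ∂(Measure.pi μi) := by
  intro n
  induction n with
  | zero =>
    intro μi hprob f g hf2 hg2 hfm hgm
    haveI := hprob
    haveI : IsProbabilityMeasure (Measure.pi μi) := by infer_instance
    have hf : f = fun _ => f default := by
      funext ω; congr 1; exact Subsingleton.elim _ _
    have hg : g = fun _ => g default := by
      funext ω; congr 1; exact Subsingleton.elim _ _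
    rw [hf, hg]
    simp
  | succ n IH =>
    intro μi hprob f g hf2 hg2 hfm hgm
    haveI := hprob
    set ν : Fin n → Measure ℝ := fun j => μi j.succ with hν
    haveI : ∀ j, IsProbabilityMeasure (ν j) := fun j => hprob _
    set e := MeasurableEquiv.piFinSuccAbove (fun _ : Fin (n + 1) => ℝ) 0 with he
    have mp : MeasurePreserving e (Measure.pi μi) ((μi 0).prod (Measure.pi ν)) := by
      have := measurePreserving_piFinSuccAbove μi 0
      simpa [hν, Fin.succAbove, he] using this
    have hsymm : ∀ p : ℝ × (Fin n → ℝ), e.symm p = Fin.cons p.1 p.2 := by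
      intro p
      simp [he, Fin.insertNthEquiv, Fin.insertNth_zero']
    have hmonoE : Monotone (fun p : ℝ × (Fin n → ℝ) => e.symm p) := by
      intro p q hpq
      show e.symm p ≤ e.symm q
      rw [hsymm, hsymm]
      intro k
      refine Fin.cases ?_ ?_ k
      · simpa using hpq.1
      · intro j; simpa using hpq.2 j
    set φ : ℝ × (Fin n → ℝ) → ℝ := fun p => f (e.symm p) with hφ
    set ψ : ℝ × (Fin n → ℝ) → ℝ := fun p => g (e.symm p) with hψ
    have mps : MeasurePreserving e.symm ((μi 0).prod (Measure.pi ν)) (Measure.pi μi) :=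
      MeasurePreserving.symm e mp
    have hφ2 : MemLp φ 2 ((μi 0).prod (Measure.pi ν)) :=
      hf2.comp_measurePreserving mps
    have hψ2 : MemLp ψ 2 ((μi 0).prod (Measure.pi ν)) :=
      hg2.comp_measurePreserving mps
    have hint : ∀ h : (Fin (n + 1) → ℝ) → ℝ,
        ∫ p, h (e.symm p) ∂((μi 0).prod (Measure.pi ν)) = ∫ ω, h ω ∂(Measure.pi μi) :=
      fun h => mps.integral_comp e.symm.measurableEmbedding h
    rw [← hint f, ← hint g, ← hint (fun ω => f ω * g ω)]
    exact harris_step (μi 0) (Measure.pi ν) φ ψ hφ2 hψ2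
      (fun p q hpq => hfm (hmonoE hpq)) (fun p q hpq => hgm (hmonoE hpq))
      (fun u v hu hv hum hvm => IH ν (fun j => hprob _) u v hu hv hum hvm)

theorem fkg_inequality_functions (n : ℕ) (μi : Fin n → Measure ℝ)
    [∀ i, IsProbabilityMeasure (μi i)]
    (f g : (Fin n → ℝ) → ℝ)
    (hf2 : MemLp f 2 (Measure.pi μi))
    (hg2 : MemLp g 2 (Measure.pi μi))
    (hmono : (Monotone f ∧ Monotone g) ∨ (Antitone f ∧ Antitone g)) :
    ∫ ω, f ω * g ω ∂(Measure.pi μi) ≥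
      (∫ ω, f ω ∂(Measure.pi μi)) * ∫ ω, g ω ∂(Measure.pi μi) := by
  rcases hmono with ⟨hfm, hgm⟩ | ⟨hfa, hga⟩
  · exact harris_pi n μi inferInstance f g hf2 hg2 hfm hgm
  · have h := harris_pi n μi inferInstance (-f) (-g) hf2.neg hg2.neg
      (fun x y hxy => neg_le_neg (hfa hxy)) (fun x y hxy => neg_le_neg (hga hxy))
    simp only [Pi.neg_apply, integral_neg, neg_mul_neg] at h
    exact h
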